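/- Let m > 1 be an integer and let h_j/k_j < h_{j+1}/k_{j+1} < h_{j+2}/k_{j+2} be three successive fractions of F(B(2m),m), i.e. each is the successor of the preceding one (all fractions in lowest terms), and suppose h_j/k_j ≥ 1/2. Then h_j = ⌊(h_{j+2}+m)/h_{j+1}⌋·h_{j+1} − h_{j+2}, k_j = ⌊(h_{j+2}+m)/h_{j+1}⌋·k_{j+1} − k_{j+2}, h_{j+2} = ⌊(h_j+m)/h_{j+1}⌋·h_{j+1} − h_j, and k_{j+2} = ⌊(h_j+m)/h_{j+1}⌋·k_{j+1} − k_j. -/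

import Mathlib

/-- The Farey sequence `F_n` of order `n`, viewed as the set of rationals `q`
with `0 ≤ q ≤ 1` whose lowest-terms denominator is at most `n`. -/
def Farey (n : ℕ) : Set ℚ :=
  {q : ℚ | 0 ≤ q ∧ q ≤ 1 ∧ q.den ≤ n}

/-- The Farey subsequence `F(B(n),m)`: fractions `h/k ∈ F_n` in lowest terms
with `h ≤ m` and `k - h ≤ n - m`. -/
def FareyB (n m : ℕ) : Set ℚ :=
  {q : ℚ | 0 ≤ q ∧ q ≤ 1 ∧ q.den ≤ n ∧ q.num ≤ (m : ℤ) ∧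
    (q.den : ℤ) - q.num ≤ (n : ℤ) - (m : ℤ)}

/-- `f'` is the predecessor of `f` in the set `S` of rationals. -/
def IsPredIn (S : Set ℚ) (f' f : ℚ) : Prop :=
  f' ∈ S ∧ f ∈ S ∧ f' < f ∧ ∀ g ∈ S, ¬(f' < g ∧ g < f)

/-- `f'` is the successor of `f` in the set `S` of rationals. -/
def IsSuccIn (S : Set ℚ) (f f' : ℚ) : Prop :=
  f ∈ S ∧ f' ∈ S ∧ f < f' ∧ ∀ g ∈ S, ¬(f < g ∧ g < f')

lemma succ_det (m : ℕ) (hm : 1 ≤ m) (h₁ k₁ h₂ k₂ : ℤ)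
    (hk₁ : 0 < k₁) (hk₂ : 0 < k₂)
    (hc₁ : Int.gcd h₁ k₁ = 1) (hc₂ : Int.gcd h₂ k₂ = 1)
    (hm₁ : (h₁ : ℚ) / (k₁ : ℚ) ∈ FareyB (2 * m) m)
    (hm₂ : (h₂ : ℚ) / (k₂ : ℚ) ∈ FareyB (2 * m) m)
    (hs : IsSuccIn (FareyB (2 * m) m) ((h₁ : ℚ) / (k₁ : ℚ)) ((h₂ : ℚ) / (k₂ : ℚ)))
    (hge : 1 / 2 ≤ (h₁ : ℚ) / (k₁ : ℚ)) :
    h₂ * k₁ - h₁ * k₂ = 1 ∧ (m : ℤ) < h₁ + h₂ := by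
  have hk₁Q : (0 : ℚ) < (k₁ : ℚ) := by exact_mod_cast hk₁
  have hk₂Q : (0 : ℚ) < (k₂ : ℚ) := by exact_mod_cast hk₂
  have hnum₁ : ((h₁ : ℚ) / (k₁ : ℚ)).num = h₁ := Rat.num_div_eq_of_coprime hk₁ hc₁
  have hnum₂ : ((h₂ : ℚ) / (k₂ : ℚ)).num = h₂ := Rat.num_div_eq_of_coprime hk₂ hc₂
  have hh₁m : h₁ ≤ (m : ℤ) := by have := hm₁.2.2.2.1; rwa [hnum₁] at this
  have hk2h : k₁ ≤ 2 * h₁ := by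
    rw [div_le_div_iff₀ (by norm_num) hk₁Q] at hge
    have : (1 : ℤ) * k₁ ≤ h₁ * 2 := by exact_mod_cast hge
    omega
  have hh₁pos : 1 ≤ h₁ := by omega
  have hlt2 : (h₁ : ℚ) / k₁ < (h₂ : ℚ) / k₂ := hs.2.2.1
  have hle1 : (h₂ : ℚ) / k₂ ≤ 1 := hm₂.2.1
  have hlt1 : (h₁ : ℚ) / k₁ < 1 := lt_of_lt_of_le hlt2 hle1
  have hh₁k₁ : h₁ < k₁ := by
    rw [div_lt_one hk₁Q] at hlt1; exact_mod_cast hlt1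
  -- construct the candidate successor p/q
  obtain ⟨p, q, hdet, hpgt, hpm⟩ :
      ∃ p q : ℤ, p * k₁ - h₁ * q = 1 ∧ (m : ℤ) - h₁ < p ∧ p ≤ (m : ℤ) := by
    obtain ⟨u, v, huv⟩ := Int.isCoprime_iff_gcd_eq_one.mpr hc₁
    have hdet₀ : v * k₁ - h₁ * (-u) = 1 := by linarith [huv]
    refine ⟨v + h₁ * (-((v - ((m : ℤ) - h₁ + 1)) / h₁)),
      -u + k₁ * (-((v - ((m : ℤ) - h₁ + 1)) / h₁)), by linear_combination hdet₀, ?_, ?_⟩ <;>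
    · have hpx : v + h₁ * (-((v - ((m : ℤ) - h₁ + 1)) / h₁)) =
          ((m : ℤ) - h₁ + 1) + (v - ((m : ℤ) - h₁ + 1)) % h₁ := by
        rw [Int.emod_def]; ring
      have hr0 : 0 ≤ (v - ((m : ℤ) - h₁ + 1)) % h₁ := Int.emod_nonneg _ (by omega)
      have hr1 : (v - ((m : ℤ) - h₁ + 1)) % h₁ < h₁ := Int.emod_lt_of_pos _ (by omega)
      omega
  have hp1 : 1 ≤ p := by omega
  have hq1 : 1 ≤ q := by
    by_contra hq
    push_neg at hq
    have h1 : h₁ * q ≤ 0 := mul_nonpos_of_nonneg_of_nonpos (by omega) (by omega)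
    have h2 : (1 : ℤ) * 2 ≤ p * k₁ := mul_le_mul hp1 (by omega) (by norm_num) (by omega)
    linarith
  have hpq : p ≤ q := by
    by_contra hq
    push_neg at hq
    have h1 : h₁ * q ≤ h₁ * (p - 1) := mul_le_mul_of_nonneg_left (by omega) (by omega)
    have h2 : p * (h₁ + 1) ≤ p * k₁ := mul_le_mul_of_nonneg_left (by omega) (by omega)
    nlinarith
  have hq2p : q < 2 * p := by
    have h1 : k₁ * q ≤ (2 * h₁) * q := mul_le_mul_of_nonneg_right hk2h (by omega)
    by_contra hq
    push_neg at hq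
    have h2 : (2 * p) * k₁ ≤ q * k₁ := mul_le_mul_of_nonneg_right hq (by omega)
    nlinarith
  have hqQ : (0 : ℚ) < (q : ℚ) := by exact_mod_cast (by omega : (0:ℤ) < q)
  have hcpq : Int.gcd p q = 1 :=
    Int.isCoprime_iff_gcd_eq_one.mp ⟨k₁, -h₁, by linarith [hdet]⟩
  have hnump : ((p : ℚ) / (q : ℚ)).num = p := Rat.num_div_eq_of_coprime (by omega) hcpq
  have hdenp : ((((p : ℚ) / (q : ℚ)).den) : ℤ) = q := Rat.den_div_eq_of_coprime (by omega) hcpq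
  have hmemp : (p : ℚ) / (q : ℚ) ∈ FareyB (2 * m) m := by
    refine ⟨by positivity, ?_, ?_, ?_, ?_⟩
    · rw [div_le_one hqQ]; exact_mod_cast hpq
    · have : (((p : ℚ) / (q : ℚ)).den : ℤ) ≤ (2 * m : ℤ) := by rw [hdenp]; omega
      exact_mod_cast this
    · rw [hnump]; exact hpm
    · rw [hnump, hdenp]; push_cast; omega
  have hltpq : (h₁ : ℚ) / k₁ < (p : ℚ) / q := by
    rw [div_lt_div_iff₀ hk₁Q hqQ]
    exact_mod_cast (by linarith [hdet] : h₁ * q < p * k₁)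
  have hgap : ∀ g ∈ FareyB (2 * m) m, ¬((h₁ : ℚ) / k₁ < g ∧ g < (p : ℚ) / q) := by
    rintro g hg ⟨hg1, hg2⟩
    have hbpos : (0 : ℤ) < (g.den : ℤ) := by exact_mod_cast g.pos
    have hbQ : (0 : ℚ) < ((g.den : ℤ) : ℚ) := by exact_mod_cast hbpos
    have ham : g.num ≤ (m : ℤ) := hg.2.2.2.1
    have hgab : g = (g.num : ℚ) / ((g.den : ℤ) : ℚ) := by
      exact_mod_cast (Rat.num_div_den g).symm
    rw [hgab] at hg1 hg2
    rw [div_lt_div_iff₀ hk₁Q hbQ] at hg1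
    rw [div_lt_div_iff₀ hbQ hqQ] at hg2
    have e1 : h₁ * (g.den : ℤ) + 1 ≤ g.num * k₁ := by exact_mod_cast hg1
    have e2 : g.num * q + 1 ≤ p * (g.den : ℤ) := by exact_mod_cast hg2
    have t1 : p * (h₁ * (g.den : ℤ) + 1) ≤ p * (g.num * k₁) :=
      mul_le_mul_of_nonneg_left e1 (by omega)
    have t2 : h₁ * (g.num * q + 1) ≤ h₁ * (p * (g.den : ℤ)) :=
      mul_le_mul_of_nonneg_left e2 (by omega)
    have key : p + h₁ ≤ g.num := by nlinarith [hdet]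
    omega
  have heq : (h₂ : ℚ) / k₂ = (p : ℚ) / q := by
    rcases lt_trichotomy ((h₂ : ℚ) / k₂) ((p : ℚ) / q) with h | h | h
    · exact absurd ⟨hlt2, h⟩ (hgap _ hm₂)
    · exact h
    · exact absurd ⟨hltpq, h⟩ (hs.2.2.2 _ hmemp)
  obtain ⟨hhp, hkq⟩ := Rat.div_int_inj hk₂ (by omega) hc₂ hcpq heq
  constructor
  · rw [hhp, hkq]; linarith [hdet]
  · omega

/-- Recurrences among three successive fractions of `F(B(2m),m)` lying in the
right halfsequence (`h_j/k_j ≥ 1/2`). -/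
theorem stmt_12 (m : ℕ) (hm : 1 < m)
    (h₁ k₁ h₂ k₂ h₃ k₃ : ℤ)
    (hk₁ : 0 < k₁) (hk₂ : 0 < k₂) (hk₃ : 0 < k₃)
    (hc₁ : Int.gcd h₁ k₁ = 1) (hc₂ : Int.gcd h₂ k₂ = 1) (hc₃ : Int.gcd h₃ k₃ = 1)
    (hm₁ : (h₁ : ℚ) / (k₁ : ℚ) ∈ FareyB (2 * m) m)
    (hm₂ : (h₂ : ℚ) / (k₂ : ℚ) ∈ FareyB (2 * m) m)
    (hm₃ : (h₃ : ℚ) / (k₃ : ℚ) ∈ FareyB (2 * m) m)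
    (hs₁ : IsSuccIn (FareyB (2 * m) m) ((h₁ : ℚ) / (k₁ : ℚ)) ((h₂ : ℚ) / (k₂ : ℚ)))
    (hs₂ : IsSuccIn (FareyB (2 * m) m) ((h₂ : ℚ) / (k₂ : ℚ)) ((h₃ : ℚ) / (k₃ : ℚ)))
    (hge : 1 / 2 ≤ (h₁ : ℚ) / (k₁ : ℚ)) :
    h₁ = ⌊((h₃ : ℚ) + (m : ℚ)) / (h₂ : ℚ)⌋ * h₂ - h₃ ∧
    k₁ = ⌊((h₃ : ℚ) + (m : ℚ)) / (h₂ : ℚ)⌋ * k₂ - k₃ ∧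
    h₃ = ⌊((h₁ : ℚ) + (m : ℚ)) / (h₂ : ℚ)⌋ * h₂ - h₁ ∧
    k₃ = ⌊((h₁ : ℚ) + (m : ℚ)) / (h₂ : ℚ)⌋ * k₂ - k₁ := by
  have hm1 : 1 ≤ m := le_of_lt hm
  obtain ⟨det12, hb12⟩ := succ_det m hm1 h₁ k₁ h₂ k₂ hk₁ hk₂ hc₁ hc₂ hm₁ hm₂ hs₁ hge
  have hge₂ : 1 / 2 ≤ (h₂ : ℚ) / (k₂ : ℚ) := le_of_lt (lt_of_le_of_lt hge hs₁.2.2.1)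
  obtain ⟨det23, hb23⟩ := succ_det m hm1 h₂ k₂ h₃ k₃ hk₂ hk₃ hc₂ hc₃ hm₂ hm₃ hs₂ hge₂
  have hnum₁ : ((h₁ : ℚ) / (k₁ : ℚ)).num = h₁ := Rat.num_div_eq_of_coprime hk₁ hc₁
  have hnum₃ : ((h₃ : ℚ) / (k₃ : ℚ)).num = h₃ := Rat.num_div_eq_of_coprime hk₃ hc₃
  have hh₁m : h₁ ≤ (m : ℤ) := by have := hm₁.2.2.2.1; rwa [hnum₁] at this
  have hh₃m : h₃ ≤ (m : ℤ) := by have := hm₃.2.2.2.1; rwa [hnum₃] at this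
  have hk₂Q : (0 : ℚ) < (k₂ : ℚ) := by exact_mod_cast hk₂
  have hh₂pos : 1 ≤ h₂ := by
    rw [div_le_div_iff₀ (by norm_num) hk₂Q] at hge₂
    have : (1 : ℤ) * k₂ ≤ h₂ * 2 := by exact_mod_cast hge₂
    omega
  have hh₂Q : (0 : ℚ) < (h₂ : ℚ) := by exact_mod_cast (by omega : (0:ℤ) < h₂)
  have hmed : (h₁ + h₃) * k₂ = (k₁ + k₃) * h₂ := by linear_combination det23 - det12
  obtain ⟨r, hr⟩ : h₂ ∣ (h₁ + h₃) := by
    have hcop : IsCoprime h₂ k₂ := Int.isCoprime_iff_gcd_eq_one.mpr hc₂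
    exact hcop.dvd_of_dvd_mul_right ⟨k₁ + k₃, by linear_combination hmed⟩
  have hkr : k₁ + k₃ = k₂ * r := by
    have h2ne : (h₂ : ℤ) ≠ 0 := by omega
    have hh : h₂ * (k₁ + k₃) = h₂ * (k₂ * r) := by linear_combination k₂ * hr - hmed
    exact mul_left_cancel₀ h2ne hh
  have floor1 : ⌊((h₁ : ℚ) + (m : ℚ)) / (h₂ : ℚ)⌋ = r := by
    rw [Int.floor_eq_iff]
    constructor
    · rw [le_div_iff₀ hh₂Q]
      exact_mod_cast (by linarith [hr, hh₃m] : r * h₂ ≤ h₁ + (m : ℤ))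
    · rw [div_lt_iff₀ hh₂Q]
      exact_mod_cast (by linarith [hr, hb23] : h₁ + (m : ℤ) < (r + 1) * h₂)
  have floor3 : ⌊((h₃ : ℚ) + (m : ℚ)) / (h₂ : ℚ)⌋ = r := by
    rw [Int.floor_eq_iff]
    constructor
    · rw [le_div_iff₀ hh₂Q]
      exact_mod_cast (by linarith [hr, hh₁m] : r * h₂ ≤ h₃ + (m : ℤ))
    · rw [div_lt_iff₀ hh₂Q]
      exact_mod_cast (by linarith [hr, hb12] : h₃ + (m : ℤ) < (r + 1) * h₂)
  rw [floor1, floor3]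
  refine ⟨by linarith [hr], by linarith [hkr], by linarith [hr], by linarith [hkr]⟩
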